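/- Define Ψ(p,q) := (1+pq)/(p+q) for p, q ≥ 1. If A, B are positive matrices (compatible for multiplication, all dimensions ≥ 2) with S(A) := √(R(A)) and S(B) := √(R(B)), then S(AB) ≤ Ψ(S(A), S(B)). -/

import Mathlib

noncomputable def Rdist {m n : ℕ} (A : Matrix (Fin m) (Fin n) ℝ) : ℝ :=
  ⨆ i, ⨆ j, ⨆ k, ⨆ l, A i k * A j l / (A i l * A j k)

lemma corecalc (p q A1 A2 B1 B2 : ℝ) (hp : 1 ≤ p) (hq : 1 ≤ q)
    (hA1 : 0 ≤ A1) (hA2 : 0 ≤ A2) (hB1 : 0 ≤ B1) (hB2 : 0 ≤ B2)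
    (hcon : A1 * B2 ≤ p ^ 2 * (A2 * B1)) :
    (p + q) ^ 2 * ((q ^ 2 * A1 + A2) * (B1 + B2)) ≤
      (1 + p * q) ^ 2 * ((A1 + A2) * (q ^ 2 * B1 + B2)) := by
  have hp2 : 1 ≤ p ^ 2 := by nlinarith
  have hq2 : 1 ≤ q ^ 2 := by nlinarith
  have hX : 0 ≤ A1 + p ^ 2 * A2 := by nlinarith
  have step1 : (B1 + B2) * (q ^ 2 * A1 + p ^ 2 * A2) ≤
      (q ^ 2 * B1 + B2) * (A1 + p ^ 2 * A2) := by
    nlinarith [mul_nonneg (by nlinarith : (0:ℝ) ≤ q ^ 2 - 1)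
      (by nlinarith : (0:ℝ) ≤ p ^ 2 * (A2 * B1) - A1 * B2)]
  have step2 : (p + q) ^ 2 * ((q ^ 2 * A1 + A2) * (A1 + p ^ 2 * A2)) ≤
      (1 + p * q) ^ 2 * ((A1 + A2) * (q ^ 2 * A1 + p ^ 2 * A2)) := by
    nlinarith [mul_nonneg (mul_nonneg (by nlinarith : (0:ℝ) ≤ p ^ 2 - 1)
      (by nlinarith : (0:ℝ) ≤ q ^ 2 - 1)) (sq_nonneg (q * A1 - p * A2))]
  rcases eq_or_lt_of_le hX with h | h
  · have hA1' : A1 = 0 := by nlinarith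
    have hA2' : A2 = 0 := by nlinarith
    simp [hA1', hA2']
  · have key : ((p + q) ^ 2 * ((q ^ 2 * A1 + A2) * (B1 + B2))) * (A1 + p ^ 2 * A2) ≤
        ((1 + p * q) ^ 2 * ((A1 + A2) * (q ^ 2 * B1 + B2))) * (A1 + p ^ 2 * A2) := by
      have t1 := mul_le_mul_of_nonneg_left step1
        (by positivity : (0:ℝ) ≤ (1 + p * q) ^ 2 * (A1 + A2))
      have t2 := mul_le_mul_of_nonneg_right step2 (by linarith : (0:ℝ) ≤ B1 + B2)
      nlinarith [t1, t2]
    exact le_of_mul_le_mul_right key h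

lemma keyvec {n : ℕ} (hn : 0 < n) (a b c d : Fin n → ℝ)
    (ha : ∀ s, 0 < a s) (hb : ∀ s, 0 < b s) (hc : ∀ s, 0 < c s) (hd : ∀ s, 0 < d s)
    (p q : ℝ) (hp : 1 ≤ p) (hq : 1 ≤ q)
    (hab : ∀ s t, a s * b t ≤ p ^ 2 * (a t * b s))
    (hcd : ∀ s t, c s * d t ≤ q ^ 2 * (c t * d s)) :
    (p + q) ^ 2 * ((∑ s, a s * c s) * (∑ t, b t * d t)) ≤
      (1 + p * q) ^ 2 * ((∑ s, a s * d s) * (∑ t, b t * c t)) := by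
  classical
  haveI : Nonempty (Fin n) := Fin.pos_iff_nonempty.mp hn
  set Sa : ℝ := ∑ s, a s * d s with hSa
  set Sb : ℝ := ∑ s, b s * d s with hSb
  obtain ⟨s₀, -, hs₀⟩ := Finset.exists_min_image Finset.univ (fun s => c s / d s)
    Finset.univ_nonempty
  set m : ℝ := c s₀ / d s₀ with hm'
  have hm : 0 < m := div_pos (hc s₀) (hd s₀)
  have hlb : ∀ s, m * d s ≤ c s := fun s =>
    (le_div_iff₀ (hd s)).mp (hs₀ s (Finset.mem_univ s))
  have hub : ∀ s, c s ≤ q ^ 2 * m * d s := by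
    intro s
    have h := hcd s s₀
    have h2 : q ^ 2 * m * d s * d s₀ = q ^ 2 * (c s₀ * d s) := by
      field_simp [hm', (hd s₀).ne']
      rw [hm']; field_simp
      rw [eq_comm, eq_div_iff (hd s₀).ne']; ring
    have h3 : c s * d s₀ ≤ q ^ 2 * m * d s * d s₀ := by rw [h2]; exact h
    exact le_of_mul_le_mul_right h3 (hd s₀)
  set P : Fin n → Prop :=
    fun s => 0 < (p + q) ^ 2 * (a s * Sb) - (1 + p * q) ^ 2 * (Sa * b s) with hP
  set c' : Fin n → ℝ := fun s => if P s then q ^ 2 * m * d s else m * d s with hc'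
  have expand : ∀ u : Fin n → ℝ,
      (p + q) ^ 2 * ((∑ s, a s * u s) * Sb) - (1 + p * q) ^ 2 * (Sa * (∑ s, b s * u s)) =
        ∑ s, u s * ((p + q) ^ 2 * (a s * Sb) - (1 + p * q) ^ 2 * (Sa * b s)) := by
    intro u
    rw [Finset.sum_mul, Finset.mul_sum, Finset.mul_sum, Finset.mul_sum,
      ← Finset.sum_sub_distrib]
    exact Finset.sum_congr rfl fun s _ => by ring
  have hswap : (p + q) ^ 2 * ((∑ s, a s * c s) * Sb)
        - (1 + p * q) ^ 2 * (Sa * (∑ s, b s * c s)) ≤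
      (p + q) ^ 2 * ((∑ s, a s * c' s) * Sb)
        - (1 + p * q) ^ 2 * (Sa * (∑ s, b s * c' s)) := by
    rw [expand c, expand c']
    refine Finset.sum_le_sum fun s _ => ?_
    by_cases hs : P s
    · have hcc : c s ≤ c' s := by rw [hc']; simp only [if_pos hs]; exact hub s
      exact mul_le_mul_of_nonneg_right hcc (le_of_lt hs)
    · have hcc : c' s ≤ c s := by rw [hc']; simp only [if_neg hs]; exact hlb s
      exact mul_le_mul_of_nonpos_right hcc (not_lt.mp hs)
  set S : Finset (Fin n) := Finset.univ.filter P with hS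
  set Sc : Finset (Fin n) := Finset.univ.filter (fun s => ¬ P s) with hSc
  set A1 : ℝ := ∑ s ∈ S, a s * d s with hA1'
  set A2 : ℝ := ∑ s ∈ Sc, a s * d s with hA2'
  set B1 : ℝ := ∑ s ∈ S, b s * d s with hB1'
  set B2 : ℝ := ∑ s ∈ Sc, b s * d s with hB2'
  have hSaeq : A1 + A2 = Sa := Finset.sum_filter_add_sum_filter_not Finset.univ P _
  have hSbeq : B1 + B2 = Sb := Finset.sum_filter_add_sum_filter_not Finset.univ P _
  have e1 : ∑ s, a s * c' s = m * (q ^ 2 * A1 + A2) := by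
    rw [← Finset.sum_filter_add_sum_filter_not Finset.univ P (fun s => a s * c' s)]
    have t1 : ∑ s ∈ S, a s * c' s = q ^ 2 * m * A1 := by
      rw [hA1', Finset.mul_sum]
      exact Finset.sum_congr rfl fun s hs => by
        rw [hc']; simp only [if_pos ((Finset.mem_filter.mp hs).2)]; ring
    have t2 : ∑ s ∈ Sc, a s * c' s = m * A2 := by
      rw [hA2', Finset.mul_sum]
      exact Finset.sum_congr rfl fun s hs => by
        rw [hc']; simp only [if_neg ((Finset.mem_filter.mp hs).2)]; ring
    rw [← hS, ← hSc, t1, t2]; ring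
  have e2 : ∑ s, b s * c' s = m * (q ^ 2 * B1 + B2) := by
    rw [← Finset.sum_filter_add_sum_filter_not Finset.univ P (fun s => b s * c' s)]
    have t1 : ∑ s ∈ S, b s * c' s = q ^ 2 * m * B1 := by
      rw [hB1', Finset.mul_sum]
      exact Finset.sum_congr rfl fun s hs => by
        rw [hc']; simp only [if_pos ((Finset.mem_filter.mp hs).2)]; ring
    have t2 : ∑ s ∈ Sc, b s * c' s = m * B2 := by
      rw [hB2', Finset.mul_sum]
      exact Finset.sum_congr rfl fun s hs => by
        rw [hc']; simp only [if_neg ((Finset.mem_filter.mp hs).2)]; ring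
    rw [← hS, ← hSc, t1, t2]; ring
  have hA1n : 0 ≤ A1 := Finset.sum_nonneg fun s _ => (mul_pos (ha s) (hd s)).le
  have hA2n : 0 ≤ A2 := Finset.sum_nonneg fun s _ => (mul_pos (ha s) (hd s)).le
  have hB1n : 0 ≤ B1 := Finset.sum_nonneg fun s _ => (mul_pos (hb s) (hd s)).le
  have hB2n : 0 ≤ B2 := Finset.sum_nonneg fun s _ => (mul_pos (hb s) (hd s)).le
  have hcon : A1 * B2 ≤ p ^ 2 * (A2 * B1) := by
    have rhs : p ^ 2 * (A2 * B1) = ∑ t ∈ Sc, ∑ s ∈ S, p ^ 2 * ((a t * d t) * (b s * d s)) := by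
      rw [hA2', hB1', Finset.sum_mul_sum]
      simp only [Finset.mul_sum]
    calc A1 * B2 = ∑ s ∈ S, ∑ t ∈ Sc, (a s * d s) * (b t * d t) :=
          Finset.sum_mul_sum S Sc _ _
      _ ≤ ∑ s ∈ S, ∑ t ∈ Sc, p ^ 2 * ((a t * d t) * (b s * d s)) := by
          refine Finset.sum_le_sum fun s _ => Finset.sum_le_sum fun t _ => ?_
          calc (a s * d s) * (b t * d t) = (a s * b t) * (d s * d t) := by ring
            _ ≤ (p ^ 2 * (a t * b s)) * (d s * d t) :=
                mul_le_mul_of_nonneg_right (hab s t) (mul_nonneg (hd s).le (hd t).le)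
            _ = p ^ 2 * ((a t * d t) * (b s * d s)) := by ring
      _ = ∑ t ∈ Sc, ∑ s ∈ S, p ^ 2 * ((a t * d t) * (b s * d s)) := Finset.sum_comm
      _ = p ^ 2 * (A2 * B1) := rhs.symm
  have cc := corecalc p q A1 A2 B1 B2 hp hq hA1n hA2n hB1n hB2n hcon
  have vertex : (p + q) ^ 2 * ((∑ s, a s * c' s) * Sb) ≤
      (1 + p * q) ^ 2 * (Sa * (∑ s, b s * c' s)) := by
    rw [e1, e2, ← hSaeq, ← hSbeq]
    nlinarith [mul_le_mul_of_nonneg_left cc hm.le]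
  linarith [hswap, vertex]

lemma le_Rdist {m n : ℕ} (A : Matrix (Fin m) (Fin n) ℝ) (i j : Fin m) (k l : Fin n) :
    A i k * A j l / (A i l * A j k) ≤ Rdist A := by
  have h1 : A i k * A j l / (A i l * A j k) ≤ ⨆ l', A i k * A j l' / (A i l' * A j k) :=
    le_ciSup (f := fun l' => A i k * A j l' / (A i l' * A j k))
      (Set.Finite.bddAbove (Set.finite_range _)) l
  have h2 : (⨆ l', A i k * A j l' / (A i l' * A j k)) ≤
      ⨆ k', ⨆ l', A i k' * A j l' / (A i l' * A j k') :=
    le_ciSup (f := fun k' => ⨆ l', A i k' * A j l' / (A i l' * A j k'))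
      (Set.Finite.bddAbove (Set.finite_range _)) k
  have h3 : (⨆ k', ⨆ l', A i k' * A j l' / (A i l' * A j k')) ≤
      ⨆ j', ⨆ k', ⨆ l', A i k' * A j' l' / (A i l' * A j' k') :=
    le_ciSup (f := fun j' => ⨆ k', ⨆ l', A i k' * A j' l' / (A i l' * A j' k'))
      (Set.Finite.bddAbove (Set.finite_range _)) j
  have h4 : (⨆ j', ⨆ k', ⨆ l', A i k' * A j' l' / (A i l' * A j' k')) ≤ Rdist A :=
    le_ciSup (f := fun i' => ⨆ j', ⨆ k', ⨆ l', A i' k' * A j' l' / (A i' l' * A j' k'))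
      (Set.Finite.bddAbove (Set.finite_range _)) i
  exact h1.trans (h2.trans (h3.trans h4))

theorem stmt16 (d1 d2 d3 : ℕ) (h1 : 2 ≤ d1) (h2 : 2 ≤ d2) (h3 : 2 ≤ d3)
    (A : Matrix (Fin d1) (Fin d2) ℝ) (B : Matrix (Fin d2) (Fin d3) ℝ)
    (hA : ∀ i j, 0 < A i j) (hB : ∀ i j, 0 < B i j)
    (Ψ : ℝ → ℝ → ℝ) (hΨ : ∀ p q, Ψ p q = (1 + p * q) / (p + q)) :
    Real.sqrt (Rdist (A * B)) ≤ Ψ (Real.sqrt (Rdist A)) (Real.sqrt (Rdist B)) := by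
  have hd2 : 0 < d2 := by omega
  haveI : Nonempty (Fin d1) := ⟨⟨0, by omega⟩⟩
  haveI : Nonempty (Fin d2) := ⟨⟨0, by omega⟩⟩
  haveI : Nonempty (Fin d3) := ⟨⟨0, by omega⟩⟩
  set p := Real.sqrt (Rdist A) with hpdef
  set q := Real.sqrt (Rdist B) with hqdef
  have oneA : 1 ≤ Rdist A := by
    have h := le_Rdist A (Classical.arbitrary _) (Classical.arbitrary _)
      (Classical.arbitrary _) (Classical.arbitrary _)
    rwa [div_self (mul_pos (hA _ _) (hA _ _)).ne'] at h
  have oneB : 1 ≤ Rdist B := by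
    have h := le_Rdist B (Classical.arbitrary _) (Classical.arbitrary _)
      (Classical.arbitrary _) (Classical.arbitrary _)
    rwa [div_self (mul_pos (hB _ _) (hB _ _)).ne'] at h
  have hp1 : 1 ≤ p := by
    have := Real.sqrt_le_sqrt oneA
    simpa [hpdef] using this
  have hq1 : 1 ≤ q := by
    have := Real.sqrt_le_sqrt oneB
    simpa [hqdef] using this
  have hp2 : p ^ 2 = Rdist A := Real.sq_sqrt (zero_le_one.trans oneA)
  have hq2 : q ^ 2 = Rdist B := Real.sq_sqrt (zero_le_one.trans oneB)
  have hab : ∀ (i j : Fin d1) (s t : Fin d2), A i s * A j t ≤ p ^ 2 * (A i t * A j s) := by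
    intro i j s t
    have h := le_Rdist A i j s t
    rw [div_le_iff₀ (mul_pos (hA i t) (hA j s))] at h
    rw [hp2]
    linarith [h]
  have hcd : ∀ (k l : Fin d3) (s t : Fin d2), B s k * B t l ≤ q ^ 2 * (B t k * B s l) := by
    intro k l s t
    have h := le_Rdist B s t k l
    rw [div_le_iff₀ (mul_pos (hB s l) (hB t k))] at h
    rw [hq2]
    nlinarith [h]
  have hABpos : ∀ (i : Fin d1) (k : Fin d3), 0 < (A * B) i k := by
    intro i k
    rw [Matrix.mul_apply]
    exact Finset.sum_pos (fun s _ => mul_pos (hA i s) (hB s k)) Finset.univ_nonempty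
  have hpq : (0:ℝ) < p + q := by linarith
  have main : ∀ (i j : Fin d1) (k l : Fin d3),
      (A * B) i k * (A * B) j l / ((A * B) i l * (A * B) j k) ≤
        ((1 + p * q) / (p + q)) ^ 2 := by
    intro i j k l
    rw [div_le_iff₀ (mul_pos (hABpos i l) (hABpos j k))]
    have kv := keyvec hd2 (fun s => A i s) (fun s => A j s) (fun s => B s k) (fun s => B s l)
      (fun s => hA i s) (fun s => hA j s) (fun s => hB s k) (fun s => hB s l)
      p q hp1 hq1 (fun s t => hab i j s t) (fun s t => hcd k l s t)
    simp only [Matrix.mul_apply]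
    rw [div_pow, div_mul_eq_mul_div, le_div_iff₀ (by positivity)]
    calc (∑ s, A i s * B s k) * (∑ t, A j t * B t l) * (p + q) ^ 2
        = (p + q) ^ 2 * ((∑ s, A i s * B s k) * (∑ t, A j t * B t l)) := by ring
      _ ≤ (1 + p * q) ^ 2 * ((∑ s, A i s * B s l) * (∑ t, A j t * B t k)) := kv
  have hRAB : Rdist (A * B) ≤ ((1 + p * q) / (p + q)) ^ 2 := by
    unfold Rdist
    exact ciSup_le fun i => ciSup_le fun j => ciSup_le fun k => ciSup_le fun l => main i j k l
  rw [hΨ]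
  have hfin := Real.sqrt_le_sqrt hRAB
  rwa [Real.sqrt_sq (div_nonneg (by nlinarith) hpq.le)] at hfin
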